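/- Let S and A be finite nonempty types, γ ∈ [0,1) a real discount factor, and P : S × A → S → ℝ a transition kernel such that for every (s,a), the vector P(s,a) has nonnegative entries summing to 1. For a deterministic policy π : S → A and reward r : S × A → ℝ, let Q^{π,r} : S × A → ℝ denote the unique function satisfying Q^{π,r}(s,a) = r(s,a) + γ·∑_{s'∈S} P(s,a)(s')·Q^{π,r}(s', π(s')) for all (s,a). Let d ∈ ℕ and φ : S × A → ℝ^d with ‖φ(s,a)‖₂ ≤ φ_max for all (s,a); for a policy π let Ψ^π : S × A → ℝ^d be the unique function satisfying Ψ^π(s,a) = φ(s,a) + γ·∑_{s'} P(s,a)(s')·Ψ^π(s', π(s')). Let K ≥ 1, and for i = 1,…,K let π_i : S → A be a policy, r_i : S × A → ℝ a reward, and w_i ∈ ℝ^d, such that each π_i is optimal for r_i (i.e., Q^{π_i, r_i}(s,a) ≥ Q^{π, r_i}(s,a) for every deterministic policy π and every (s,a)) and |⟨φ(s,a), w_i⟩ − r_i(s,a)| ≤ δ_r for all (s,a). Let r' : S × A → ℝ and w' ∈ ℝ^d satisfy |⟨φ(s,a), w'⟩ − r'(s,a)| ≤ δ_r for all (s,a),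 and let π* be a policy optimal for r'. Let Ψ̃^i : S × A → ℝ^d satisfy ‖Ψ̃^i(s,a) − Ψ^{π_i}(s,a)‖₂ ≤ δ_Ψ for all i and all (s,a), and let π : S → A be a generalised policy improvement (GPI) policy for {Ψ̃^i} and w', i.e., for every s ∈ S, max_{1≤i≤K} ⟨Ψ̃^i(s, π(s)), w'⟩ = max_{a∈A} max_{1≤i≤K} ⟨Ψ̃^i(s,a), w'⟩. Then for every (s,a) ∈ S × A: Q^{π*, r'}(s,a) − Q^{π, r'}(s,a) ≤ (2/(1−γ)) · [ φ_max · min_{1≤j≤K} ‖w' − w_j‖₂ + 2·δ_r + ‖w'‖₂·δ_Ψ + δ_r/(1−γ) ]. -/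

import Mathlib

/-- If two functions satisfy Bellman equations (same policy, rewards within `ε`
of each other), they are within `ε / (1 - γ)` pointwise. -/
lemma psiphi_bellman_lipschitz {S A : Type*} [Fintype S] [Nonempty S]
    [Fintype A] [Nonempty A]
    (γ : ℝ) (hγ0 : 0 ≤ γ) (hγ1 : γ < 1)
    (P : S × A → S → ℝ)
    (hP0 : ∀ (sa : S × A) (s' : S), 0 ≤ P sa s')
    (hP1 : ∀ sa : S × A, ∑ s' : S, P sa s' = 1)
    (π : S → A) (r1 r2 f g : S × A → ℝ)
    (hf : ∀ sa, f sa = r1 sa + γ * ∑ s' : S, P sa s' * f (s', π s'))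
    (hg : ∀ sa, g sa = r2 sa + γ * ∑ s' : S, P sa s' * g (s', π s'))
    (ε : ℝ) (hr : ∀ sa, |r1 sa - r2 sa| ≤ ε) :
    ∀ sa, |f sa - g sa| ≤ ε / (1 - γ) := by
  have h1γ : (0:ℝ) < 1 - γ := by linarith
  obtain ⟨sa0, -, hmax⟩ := Finset.exists_max_image (Finset.univ : Finset (S × A))
    (fun sa => |f sa - g sa|) Finset.univ_nonempty
  set M := |f sa0 - g sa0| with hM
  have hMle : ∀ sa, |f sa - g sa| ≤ M := fun sa => hmax sa (Finset.mem_univ _)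
  have hstep : M ≤ ε + γ * M := by
    have hdiff : f sa0 - g sa0
        = (r1 sa0 - r2 sa0) + γ * ∑ s' : S, P sa0 s' * (f (s', π s') - g (s', π s')) := by
      have hsum : ∑ s' : S, P sa0 s' * (f (s', π s') - g (s', π s'))
          = (∑ s' : S, P sa0 s' * f (s', π s')) - ∑ s' : S, P sa0 s' * g (s', π s') := by
        simp [mul_sub, Finset.sum_sub_distrib]
      rw [hf sa0, hg sa0, hsum]; ring
    have hsb : |∑ s' : S, P sa0 s' * (f (s', π s') - g (s', π s'))| ≤ M := by
      calc |∑ s' : S, P sa0 s' * (f (s', π s') - g (s', π s'))|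
          ≤ ∑ s' : S, |P sa0 s' * (f (s', π s') - g (s', π s'))| :=
            Finset.abs_sum_le_sum_abs _ _
        _ ≤ ∑ s' : S, P sa0 s' * M := by
            refine Finset.sum_le_sum fun s' _ => ?_
            rw [abs_mul, abs_of_nonneg (hP0 sa0 s')]
            exact mul_le_mul_of_nonneg_left (hMle _) (hP0 sa0 s')
        _ = M := by rw [← Finset.sum_mul, hP1, one_mul]
    calc M = |f sa0 - g sa0| := rfl
      _ ≤ |r1 sa0 - r2 sa0|
            + |γ * ∑ s' : S, P sa0 s' * (f (s', π s') - g (s', π s'))| := by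
          rw [hdiff]; exact abs_add_le _ _
      _ ≤ ε + γ * M := by
          refine add_le_add (hr sa0) ?_
          rw [abs_mul, abs_of_nonneg hγ0]
          exact mul_le_mul_of_nonneg_left hsb hγ0
  intro sa
  have : M ≤ ε / (1 - γ) := by
    rw [le_div_iff₀ h1γ]; nlinarith
  exact (hMle sa).trans this

/-- Theorem 2 of the paper (Generalisation Bound of ΨΦ-Learning).
`Q π r` is the action-value of policy `π` under reward `r` (unique Bellman fixed
point for `γ < 1`), `Ψ π` the successor-features function of `π` for cumulants `φ`.
Each demonstrator policy `πs i` is optimal for its reward `rs i`, which is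
`δr`-approximated by `⟨φ, ws i⟩`; the ego reward `r'` is `δr`-approximated by
`⟨φ, w'⟩`; `π⋆` is optimal for `r'`; `Ψt i` approximates `Ψ (πs i)` within `δΨ`;
and `π` is a GPI policy for `{Ψt i}` and `w'`.  Then the sub-optimality of the GPI
policy on the ego task is bounded as stated. -/
theorem psiphi_generalisation_bound {S A : Type*} [Fintype S] [Nonempty S]
    [Fintype A] [Nonempty A]
    (γ : ℝ) (hγ0 : 0 ≤ γ) (hγ1 : γ < 1)
    (P : S × A → S → ℝ)
    (hP0 : ∀ (sa : S × A) (s' : S), 0 ≤ P sa s')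
    (hP1 : ∀ sa : S × A, ∑ s' : S, P sa s' = 1)
    (d : ℕ) (φ : S × A → EuclideanSpace ℝ (Fin d)) (φmax : ℝ)
    (hφ : ∀ sa : S × A, ‖φ sa‖ ≤ φmax)
    (Q : (S → A) → (S × A → ℝ) → S × A → ℝ)
    (hQ : ∀ (π : S → A) (r : S × A → ℝ) (sa : S × A),
      Q π r sa = r sa + γ * ∑ s' : S, P sa s' * Q π r (s', π s'))
    (Ψ : (S → A) → S × A → EuclideanSpace ℝ (Fin d))
    (hΨ : ∀ (π : S → A) (sa : S × A),
      Ψ π sa = φ sa + γ • ∑ s' : S, P sa s' • Ψ π (s', π s'))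
    (K : ℕ) (hK : 1 ≤ K)
    (πs : Fin K → S → A) (rs : Fin K → S × A → ℝ)
    (ws : Fin K → EuclideanSpace ℝ (Fin d))
    (δr δΨ : ℝ)
    (hopt : ∀ (i : Fin K) (π : S → A) (sa : S × A), Q π (rs i) sa ≤ Q (πs i) (rs i) sa)
    (hwi : ∀ (i : Fin K) (sa : S × A), |(inner ℝ (φ sa) (ws i) : ℝ) - rs i sa| ≤ δr)
    (r' : S × A → ℝ) (w' : EuclideanSpace ℝ (Fin d))
    (hw' : ∀ sa : S × A, |(inner ℝ (φ sa) w' : ℝ) - r' sa| ≤ δr)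
    (πstar : S → A)
    (hπstar : ∀ (π : S → A) (sa : S × A), Q π r' sa ≤ Q πstar r' sa)
    (Ψt : Fin K → S × A → EuclideanSpace ℝ (Fin d))
    (hΨt : ∀ (i : Fin K) (sa : S × A), ‖Ψt i sa - Ψ (πs i) sa‖ ≤ δΨ)
    (π : S → A)
    (hGPI : ∀ s : S,
      (⨆ i : Fin K, (inner ℝ (Ψt i (s, π s)) w' : ℝ))
        = ⨆ a : A, ⨆ i : Fin K, (inner ℝ (Ψt i (s, a)) w' : ℝ)) :
    ∀ sa : S × A,
      Q πstar r' sa - Q π r' sa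
        ≤ (2 / (1 - γ)) *
            (φmax * (⨅ j : Fin K, ‖w' - ws j‖) + 2 * δr + ‖w'‖ * δΨ + δr / (1 - γ)) := by
  have h1γ : (0:ℝ) < 1 - γ := by linarith
  haveI : NeZero K := ⟨Nat.one_le_iff_ne_zero.mp hK⟩
  have hδr0 : 0 ≤ δr := (abs_nonneg _).trans (hw' (Classical.arbitrary _))
  have hδΨ0 : 0 ≤ δΨ := (norm_nonneg _).trans (hΨt 0 (Classical.arbitrary _))
  set ε : ℝ := ‖w'‖ * δΨ + δr / (1 - γ) with hε
  have hε0 : 0 ≤ ε :=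
    add_nonneg (mul_nonneg (norm_nonneg _) hδΨ0) (div_nonneg hδr0 h1γ.le)
  -- value functions are Lipschitz in the reward
  have hval : ∀ (μ : S → A) (r1 r2 : S × A → ℝ) (e : ℝ),
      (∀ sa, |r1 sa - r2 sa| ≤ e) → ∀ sa, |Q μ r1 sa - Q μ r2 sa| ≤ e / (1 - γ) :=
    fun μ r1 r2 e he => psiphi_bellman_lipschitz γ hγ0 hγ1 P hP0 hP1 μ r1 r2
      (Q μ r1) (Q μ r2) (hQ μ r1) (hQ μ r2) e he
  -- ⟨Ψ (πs i) ·, w'⟩ is the value of πs i for reward ⟨φ ·, w'⟩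
  have hΨBellman : ∀ (i : Fin K) (sa : S × A),
      (inner ℝ (Ψ (πs i) sa) w' : ℝ)
        = (inner ℝ (φ sa) w' : ℝ)
          + γ * ∑ s' : S, P sa s' * (inner ℝ (Ψ (πs i) (s', πs i s')) w' : ℝ) := by
    intro i sa
    rw [hΨ (πs i) sa, inner_add_left, real_inner_smul_left, sum_inner]
    simp [real_inner_smul_left, Finset.mul_sum, mul_assoc]
  have hΨQ : ∀ (i : Fin K) (sa : S × A),
      |(inner ℝ (Ψ (πs i) sa) w' : ℝ) - Q (πs i) r' sa| ≤ δr / (1 - γ) :=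
    fun i => psiphi_bellman_lipschitz γ hγ0 hγ1 P hP0 hP1 (πs i)
      (fun sa => (inner ℝ (φ sa) w' : ℝ)) r'
      (fun sa => (inner ℝ (Ψ (πs i) sa) w' : ℝ)) (Q (πs i) r')
      (hΨBellman i) (hQ (πs i) r') δr hw'
  -- the learned values approximate the true values within ε
  have hQt : ∀ (i : Fin K) (sa : S × A),
      |(inner ℝ (Ψt i sa) w' : ℝ) - Q (πs i) r' sa| ≤ ε := by
    intro i sa
    have h1 : |(inner ℝ (Ψt i sa) w' : ℝ) - (inner ℝ (Ψ (πs i) sa) w' : ℝ)| ≤ ‖w'‖ * δΨ := by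
      rw [← inner_sub_left]
      calc |(inner ℝ (Ψt i sa - Ψ (πs i) sa) w' : ℝ)|
          ≤ ‖Ψt i sa - Ψ (πs i) sa‖ * ‖w'‖ := abs_real_inner_le_norm _ _
        _ ≤ δΨ * ‖w'‖ := mul_le_mul_of_nonneg_right (hΨt i sa) (norm_nonneg _)
        _ = ‖w'‖ * δΨ := mul_comm _ _
    calc |(inner ℝ (Ψt i sa) w' : ℝ) - Q (πs i) r' sa|
        ≤ |(inner ℝ (Ψt i sa) w' : ℝ) - (inner ℝ (Ψ (πs i) sa) w' : ℝ)|
          + |(inner ℝ (Ψ (πs i) sa) w' : ℝ) - Q (πs i) r' sa| := abs_sub_le _ _ _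
      _ ≤ ‖w'‖ * δΨ + δr / (1 - γ) := add_le_add h1 (hΨQ i sa)
  -- GPI bound: Q (πs i) r' - Q π r' ≤ 2 ε / (1 - γ)
  have hGPIb : ∀ (i : Fin K) (sa : S × A),
      Q (πs i) r' sa - Q π r' sa ≤ 2 * ε / (1 - γ) := by
    obtain ⟨p0, -, hp0⟩ := Finset.exists_max_image (Finset.univ : Finset ((S × A) × Fin K))
      (fun p => Q (πs p.2) r' p.1 - Q π r' p.1) Finset.univ_nonempty
    set B := Q (πs p0.2) r' p0.1 - Q π r' p0.1 with hBdef
    have hB : ∀ (i : Fin K) (sa : S × A), Q (πs i) r' sa - Q π r' sa ≤ B :=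
      fun i sa => hp0 (sa, i) (Finset.mem_univ _)
    have hBbound : B ≤ 2 * ε / (1 - γ) := by
      set i0 := p0.2
      have hpt : ∀ s' : S,
          Q (πs i0) r' (s', πs i0 s') - Q π r' (s', π s') ≤ 2 * ε + B := by
        intro s'
        have bdd1 : BddAbove (Set.range fun k : Fin K =>
            (inner ℝ (Ψt k (s', πs i0 s')) w' : ℝ)) := (Set.finite_range _).bddAbove
        have bdd2 : BddAbove (Set.range fun a : A =>
            ⨆ k : Fin K, (inner ℝ (Ψt k (s', a)) w' : ℝ)) := (Set.finite_range _).bddAbove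
        have c1 : Q (πs i0) r' (s', πs i0 s')
            ≤ (inner ℝ (Ψt i0 (s', πs i0 s')) w' : ℝ) + ε := by
          have := abs_le.mp (hQt i0 (s', πs i0 s'))
          linarith [this.1]
        have c2 : (inner ℝ (Ψt i0 (s', πs i0 s')) w' : ℝ)
            ≤ ⨆ k : Fin K, (inner ℝ (Ψt k (s', πs i0 s')) w' : ℝ) := le_ciSup bdd1 i0
        have c3 : (⨆ k : Fin K, (inner ℝ (Ψt k (s', πs i0 s')) w' : ℝ))
            ≤ ⨆ k : Fin K, (inner ℝ (Ψt k (s', π s')) w' : ℝ) := by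
          rw [hGPI s']
          exact le_ciSup bdd2 (πs i0 s')
        have c4 : (⨆ k : Fin K, (inner ℝ (Ψt k (s', π s')) w' : ℝ))
            ≤ Q π r' (s', π s') + (B + ε) := by
          refine ciSup_le fun k => ?_
          have h1 := abs_le.mp (hQt k (s', π s'))
          have h2 := hB k (s', π s')
          linarith [h1.2]
        linarith
      have e1 := hQ (πs i0) r' p0.1
      have e2 := hQ π r' p0.1
      have hsum : ∑ s' : S, P p0.1 s'
            * (Q (πs i0) r' (s', πs i0 s') - Q π r' (s', π s'))
          = (∑ s' : S, P p0.1 s' * Q (πs i0) r' (s', πs i0 s'))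
            - ∑ s' : S, P p0.1 s' * Q π r' (s', π s') := by
        simp [mul_sub, Finset.sum_sub_distrib]
      have hsumle : ∑ s' : S, P p0.1 s'
            * (Q (πs i0) r' (s', πs i0 s') - Q π r' (s', π s')) ≤ 2 * ε + B := by
        calc ∑ s' : S, P p0.1 s' * (Q (πs i0) r' (s', πs i0 s') - Q π r' (s', π s'))
            ≤ ∑ s' : S, P p0.1 s' * (2 * ε + B) := by
              refine Finset.sum_le_sum fun s' _ =>
                mul_le_mul_of_nonneg_left (hpt s') (hP0 p0.1 s')
          _ = 2 * ε + B := by rw [← Finset.sum_mul, hP1, one_mul]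
      have hBrec : B ≤ γ * (2 * ε + B) := by
        have hBeq : B = γ * ∑ s' : S, P p0.1 s'
            * (Q (πs i0) r' (s', πs i0 s') - Q π r' (s', π s')) := by
          rw [hsum, hBdef, e1, e2]; ring
        calc B = γ * ∑ s' : S, P p0.1 s'
              * (Q (πs i0) r' (s', πs i0 s') - Q π r' (s', π s')) := hBeq
          _ ≤ γ * (2 * ε + B) := mul_le_mul_of_nonneg_left hsumle hγ0
      rw [le_div_iff₀ h1γ]; nlinarith
    intro i sa
    exact (hB i sa).trans hBbound
  -- reward comparison for each demonstrator task
  intro sa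
  obtain ⟨j, hj⟩ := exists_eq_ciInf_of_finite (f := fun j : Fin K => ‖w' - ws j‖)
  set D : ℝ := φmax * ‖w' - ws j‖ + 2 * δr with hD
  have hrj : ∀ sa : S × A, |r' sa - rs j sa| ≤ D := by
    intro sa'
    have h1 := abs_le.mp (hw' sa')
    have h2 := abs_le.mp (hwi j sa')
    have h3 : |(inner ℝ (φ sa') (w' - ws j) : ℝ)| ≤ φmax * ‖w' - ws j‖ := by
      calc |(inner ℝ (φ sa') (w' - ws j) : ℝ)|
          ≤ ‖φ sa'‖ * ‖w' - ws j‖ := abs_real_inner_le_norm _ _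
        _ ≤ φmax * ‖w' - ws j‖ :=
            mul_le_mul_of_nonneg_right (hφ sa') (norm_nonneg _)
    have h4 : (inner ℝ (φ sa') (w' - ws j) : ℝ)
        = (inner ℝ (φ sa') w' : ℝ) - (inner ℝ (φ sa') (ws j) : ℝ) := inner_sub_right _ _ _
    have h3' := abs_le.mp h3
    rw [h4] at h3'
    rw [abs_le]; constructor <;> [linarith [h1.1, h2.2, h3'.1]; linarith [h1.2, h2.1, h3'.2]]
  have hA := hval πstar r' (rs j) D hrj
  have hC := hval (πs j) (rs j) r' D (fun sa' => by
    rw [abs_sub_comm]; exact hrj sa')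
  have hstar : Q πstar r' sa - Q (πs j) r' sa ≤ 2 * D / (1 - γ) := by
    have a1 := abs_le.mp (hA sa)
    have a2 := abs_le.mp (hC sa)
    have a3 := hopt j πstar sa
    have : 2 * D / (1 - γ) = D / (1 - γ) + D / (1 - γ) := by ring
    rw [this]
    linarith [a1.2, a2.2]
  have hgpi := hGPIb j sa
  have hfinal : Q πstar r' sa - Q π r' sa ≤ 2 * D / (1 - γ) + 2 * ε / (1 - γ) := by linarith
  calc Q πstar r' sa - Q π r' sa
      ≤ 2 * D / (1 - γ) + 2 * ε / (1 - γ) := hfinal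
    _ = (2 / (1 - γ)) * (φmax * ‖w' - ws j‖ + 2 * δr + ‖w'‖ * δΨ + δr / (1 - γ)) := by
        rw [hD, hε]; ring
    _ = (2 / (1 - γ)) *
          (φmax * (⨅ j : Fin K, ‖w' - ws j‖) + 2 * δr + ‖w'‖ * δΨ + δr / (1 - γ)) := by
        rw [hj]
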